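/- arXiv:1810.01229 — 7 statements merged into one kernel-verified Lean document; each statement's English description precedes it below -/
import Mathlib

section
/- Let α, β ∈ ℝ. The sum Z_{α,β,G} := Σ_{ξ ∈ ℤ₊ⁿ} e^{W(ξ)} is finite if and only if α < 0 and α + β λ₁(G) < 0. Equivalently, the function ξ ↦ e^{W(ξ)} on ℤ₊ⁿ is summable if and only if α < 0 and α + β λ₁(G) < 0. -/
open Finset Real

/-- `W(ξ) = (α/2) Σᵢ ξᵢ(ξᵢ−1) + β Σ_{edges i∼j} ξᵢξⱼ`, with the edge sum written as half
the double sum over the entries of the adjacency matrix (each edge is counted twice). -/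
noncomputable def W {n : ℕ} (G : SimpleGraph (Fin n)) [DecidableRel G.Adj]
    (α β : ℝ) (ξ : Fin n → ℕ) : ℝ :=
  α / 2 * ∑ i, (ξ i : ℝ) * ((ξ i : ℝ) - 1)
    + β / 2 * ∑ i, ∑ j, G.adjMatrix ℝ i j * (ξ i : ℝ) * (ξ j : ℝ)

section Aux

open Matrix

variable {n : ℕ}

private lemma summable_exp_quad (a b : ℝ) (ha : a < 0) :
    Summable fun k : ℕ => Real.exp (a * (k : ℝ) ^ 2 + b * k) := by
  apply summable_of_ratio_norm_eventually_le (r := Real.exp (-1))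
    (by rw [Real.exp_lt_one_iff]; norm_num)
  filter_upwards [Filter.eventually_ge_atTop ⌈(-1 - b - a) / (2 * a)⌉₊] with k hk
  have hk' : (-1 - b - a) / (2 * a) ≤ (k : ℝ) := (Nat.le_ceil _).trans (Nat.cast_le.2 hk)
  rw [div_le_iff_of_neg (by linarith)] at hk'
  rw [Real.norm_eq_abs, Real.norm_eq_abs, abs_of_pos (Real.exp_pos _),
    abs_of_pos (Real.exp_pos _), ← Real.exp_add]
  apply Real.exp_le_exp.2
  push_cast
  nlinarith [hk']

private lemma summable_prod_pi {f : ℕ → ℝ} (h0 : ∀ k, 0 ≤ f k) (hf : Summable f) (m : ℕ) :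
    Summable fun ξ : Fin m → ℕ => ∏ i, f (ξ i) := by
  induction m with
  | zero =>
    haveI : Unique (Fin 0 → ℕ) := ⟨⟨Fin.elim0⟩, fun f => funext fun i => i.elim0⟩
    exact Summable.of_finite
  | succ m ih =>
    have h2 := Summable.mul_of_nonneg hf ih
      (fun k => h0 k) (fun ξ => Finset.prod_nonneg fun i _ => h0 _)
    refine ((Fin.consEquiv fun _ : Fin (m + 1) => ℕ).summable_iff).1 ?_
    apply h2.congr
    intro p
    simp [Fin.consEquiv, Fin.prod_univ_succ]

private lemma dot_mulVec_eq (M : Matrix (Fin n) (Fin n) ℝ) (x : Fin n → ℝ) :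
    x ⬝ᵥ (M *ᵥ x) = ∑ i, ∑ j, M i j * x i * x j := by
  simp only [dotProduct, Matrix.mulVec, Finset.mul_sum]
  exact Finset.sum_congr rfl fun i _ => Finset.sum_congr rfl fun j _ => by ring

private lemma pair_symm {M : Matrix (Fin n) (Fin n) ℝ} (hM : M.IsSymm) (x y : Fin n → ℝ) :
    x ⬝ᵥ (M *ᵥ y) = y ⬝ᵥ (M *ᵥ x) := by
  rw [Matrix.dotProduct_mulVec, ← Matrix.mulVec_transpose, hM.eq, dotProduct_comm]

private lemma kernel_of_nonpos {M : Matrix (Fin n) (Fin n) ℝ} (hM : M.IsSymm)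
    (hnp : ∀ x : Fin n → ℝ, x ⬝ᵥ (M *ᵥ x) ≤ 0) {w : Fin n → ℝ} (hw : w ⬝ᵥ (M *ᵥ w) = 0) :
    M *ᵥ w = 0 := by
  by_contra hne
  set u := M *ᵥ w with hu_def
  have hs : 0 < u ⬝ᵥ u := by
    rcases (dotProduct_self_eq_zero (v := u)).ne.2 hne |>.lt_or_gt with h | h
    · exact absurd h (not_lt.2 (Finset.sum_nonneg fun i _ => mul_self_nonneg _))
    · exact h
  have hc : u ⬝ᵥ (M *ᵥ u) ≤ 0 := hnp u
  set c := u ⬝ᵥ (M *ᵥ u) with hc_def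
  set t := (u ⬝ᵥ u) / (-c + 1) with ht_def
  have ht : 0 < t := div_pos hs (by linarith)
  have key := hnp (w + t • u)
  have hexp : (w + t • u) ⬝ᵥ (M *ᵥ (w + t • u))
      = w ⬝ᵥ (M *ᵥ w) + t * (u ⬝ᵥ (M *ᵥ w)) + t * (w ⬝ᵥ (M *ᵥ u)) + t ^ 2 * c := by
    rw [Matrix.mulVec_add, Matrix.mulVec_smul]
    simp only [add_dotProduct, dotProduct_add, smul_dotProduct,
      dotProduct_smul, smul_eq_mul]
    ring
  rw [hexp, hw, pair_symm hM w u, ← hu_def] at key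
  have htc : t * (-c) ≤ u ⬝ᵥ u := by
    rw [ht_def, div_mul_eq_mul_div, div_le_iff₀ (by linarith)]
    nlinarith [hs]
  nlinarith [hs, ht, htc]

private lemma rayleigh (G : SimpleGraph (Fin n)) [DecidableRel G.Adj] (lam1 : ℝ)
    (hlam : IsGreatest {μ : ℝ | ∃ v : Fin n → ℝ, v ≠ 0 ∧ (G.adjMatrix ℝ).mulVec v = μ • v} lam1)
    (x : Fin n → ℝ) :
    x ⬝ᵥ ((G.adjMatrix ℝ) *ᵥ x) ≤ lam1 * (x ⬝ᵥ x) := by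
  classical
  set A := G.adjMatrix ℝ with hA_def
  have hA : A.IsHermitian := by
    rw [Matrix.IsHermitian, Matrix.conjTranspose_eq_transpose_of_trivial]
    exact (SimpleGraph.isSymm_adjMatrix G)
  have hev : ∀ i, hA.eigenvalues i ≤ lam1 := by
    intro i
    refine hlam.2 ⟨⇑(hA.eigenvectorBasis i), ?_, hA.mulVec_eigenvectorBasis i⟩
    have h0 := hA.eigenvectorBasis.orthonormal.ne_zero i
    intro hc; exact h0 (by ext j; exact congrFun hc j)
  set U : Matrix (Fin n) (Fin n) ℝ := (hA.eigenvectorUnitary : Matrix (Fin n) (Fin n) ℝ)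
    with hU_def
  have hstar : star U = Uᵀ := by
    rw [Matrix.star_eq_conjTranspose, Matrix.conjTranspose_eq_transpose_of_trivial]
  have hUU : U * Uᵀ = 1 := by
    have h := (Matrix.mem_unitaryGroup_iff).1 hA.eigenvectorUnitary.2
    rwa [hstar] at h
  set y := Uᵀ *ᵥ x with hy_def
  have hy : y = x ᵥ* U := Matrix.mulVec_transpose U x
  have h2 : y ⬝ᵥ y = x ⬝ᵥ x := by
    nth_rewrite 1 [hy]
    rw [hy_def, ← Matrix.dotProduct_mulVec, Matrix.mulVec_mulVec, hUU, Matrix.one_mulVec]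
  have h1 : x ⬝ᵥ (A *ᵥ x) = ∑ i, hA.eigenvalues i * y i ^ 2 := by
    conv_lhs => rw [hA.spectral_theorem, Unitary.conjStarAlgAut_apply, hstar, ← Matrix.mulVec_mulVec, ← Matrix.mulVec_mulVec,
      Matrix.dotProduct_mulVec, ← hy]
    rw [← hy_def]
    simp only [dotProduct, Matrix.mulVec_diagonal, Function.comp_apply,
      RCLike.ofReal_real_eq_id, id_eq]
    exact Finset.sum_congr rfl fun i _ => by ring
  have h3 : y ⬝ᵥ y = ∑ i, y i ^ 2 := by
    simp [dotProduct, sq]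
  rw [h1, ← h2, h3, Finset.mul_sum]
  exact Finset.sum_le_sum fun i _ => mul_le_mul_of_nonneg_right (hev i) (sq_nonneg _)

private lemma W_eq (G : SimpleGraph (Fin n)) [DecidableRel G.Adj] (α β : ℝ) (ξ : Fin n → ℕ) :
    W G α β ξ = (α * ∑ i, (ξ i : ℝ) ^ 2
        + β * ((fun i => (ξ i : ℝ)) ⬝ᵥ (G.adjMatrix ℝ *ᵥ fun i => (ξ i : ℝ)))) / 2
      - α / 2 * ∑ i, (ξ i : ℝ) := by
  rw [dot_mulVec_eq]
  unfold W
  rw [show ∑ i, (ξ i : ℝ) * ((ξ i : ℝ) - 1) = ∑ i, (ξ i : ℝ) ^ 2 - ∑ i, (ξ i : ℝ) by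
    rw [← Finset.sum_sub_distrib]; exact Finset.sum_congr rfl fun i _ => by ring]
  ring

private lemma not_summable_helper {f : (Fin n → ℕ) → ℝ} (i0 : Fin n)
    (h : ∀ m : ℕ, ∃ ξ : Fin n → ℕ, m ≤ ξ i0 ∧ 1 ≤ f ξ) : ¬ Summable f := by
  intro hs
  have hfin : {ξ : Fin n → ℕ | 1 ≤ f ξ}.Finite := by
    have h1 := hs.tendsto_cofinite_zero
    have h2 : {ξ : Fin n → ℕ | f ξ < 1} ∈ Filter.cofinite := h1 (Iio_mem_nhds one_pos)
    rw [Filter.mem_cofinite] at h2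
    have h3 : {ξ : Fin n → ℕ | 1 ≤ f ξ} = {ξ : Fin n → ℕ | f ξ < 1}ᶜ := by
      ext ξ; simp [not_lt]
    rw [h3]; exact h2
  have himg : ((fun ξ : Fin n → ℕ => ξ i0) '' {ξ | 1 ≤ f ξ}).Finite := hfin.image _
  obtain ⟨M, hM⟩ := himg.bddAbove
  obtain ⟨ξ, h1, h2⟩ := h (M + 1)
  have h4 : ξ i0 ≤ M := hM (Set.mem_image_of_mem _ h2)
  omega

set_option maxHeartbeats 1000000 in
/-- `Z_{α,β,G} = Σ_{ξ ∈ ℤ₊ⁿ} e^{W(ξ)} < ∞` iff `α < 0` and `α + β λ₁(G) < 0`,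
where `λ₁(G)` is the largest eigenvalue of the adjacency matrix of `G`. -/
theorem stmt1 {n : ℕ} (hn : 0 < n) (G : SimpleGraph (Fin n)) [DecidableRel G.Adj]
    (α β : ℝ) (lam1 : ℝ)
    (hlam : IsGreatest
      {μ : ℝ | ∃ v : Fin n → ℝ, v ≠ 0 ∧ (G.adjMatrix ℝ).mulVec v = μ • v} lam1) :
    Summable (fun ξ : Fin n → ℕ => Real.exp (W G α β ξ)) ↔ α < 0 ∧ α + β * lam1 < 0 := by
  classical
  have hray := fun x => rayleigh G lam1 hlam x
  have hA0 : ∀ i j, 0 ≤ G.adjMatrix ℝ i j := by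
    intro i j; rw [SimpleGraph.adjMatrix_apply]; split <;> norm_num
  constructor
  · -- summable → conditions
    intro hs
    set i0 : Fin n := ⟨0, hn⟩ with hi0_def
    -- step 1 : α < 0
    have hα : α < 0 := by
      by_contra hcon; push_neg at hcon
      have hg : Function.Injective
          (fun k : ℕ => (fun i => if i = i0 then k else 0 : Fin n → ℕ)) := by
        intro a b hab
        simpa using congrFun hab i0
      have hsum := hs.comp_injective hg
      have hev := hsum.tendsto_atTop_zero.eventually_lt_const (one_pos)
      obtain ⟨k, hk⟩ := hev.exists
      have hWk : W G α β (fun i => if i = i0 then k else 0)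
          = α / 2 * ((k : ℝ) * ((k : ℝ) - 1)) := by
        unfold W
        have e1 : ∀ i : Fin n, ((if i = i0 then k else 0 : ℕ) : ℝ)
            * (((if i = i0 then k else 0 : ℕ) : ℝ) - 1)
            = if i = i0 then (k : ℝ) * ((k : ℝ) - 1) else 0 := by
          intro i; by_cases hi : i = i0 <;> simp [hi]
        have e2 : ∀ i j : Fin n, G.adjMatrix ℝ i j * ((if i = i0 then k else 0 : ℕ) : ℝ)
            * ((if j = i0 then k else 0 : ℕ) : ℝ) = 0 := by
          intro i j
          by_cases hi : i = i0 <;> by_cases hj : j = i0 <;> simp [hi, hj]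
        simp only [e1, e2, Finset.sum_const_zero, Finset.sum_ite_eq', Finset.mem_univ, if_true]
        ring
      simp only [Function.comp_apply] at hk
      rw [hWk] at hk
      have hk1 : (1 : ℝ) ≤ Real.exp (α / 2 * ((k : ℝ) * ((k : ℝ) - 1))) := by
        apply Real.one_le_exp
        rcases Nat.eq_zero_or_pos k with h | h
        · simp [h]
        · have h1 : (1 : ℝ) ≤ (k : ℝ) := by exact_mod_cast h
          have hx : 0 ≤ (k : ℝ) * ((k : ℝ) - 1) :=
            mul_nonneg (by linarith) (by linarith)
          nlinarith
      linarith
    refine ⟨hα, ?_⟩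
    have hlam0 : 0 ≤ lam1 := by
      have h := hray (fun i => if i = i0 then 1 else 0)
      rw [dot_mulVec_eq] at h
      have e2 : ∀ i j : Fin n, G.adjMatrix ℝ i j * (if i = i0 then (1:ℝ) else 0)
          * (if j = i0 then (1:ℝ) else 0) = 0 := by
        intro i j
        by_cases hi : i = i0 <;> by_cases hj : j = i0 <;> simp [hi, hj]
      have e3 : (fun i => if i = i0 then (1:ℝ) else 0) ⬝ᵥ
          (fun i => if i = i0 then (1:ℝ) else 0) = 1 := by
        simp [dotProduct, ite_and]
      simp only [e2, Finset.sum_const_zero, e3, mul_one] at h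
      exact h
    rcases le_or_gt β 0 with hβ | hβ
    · nlinarith
    -- β > 0 : by contradiction
    by_contra hge; push_neg at hge
    obtain ⟨v, hv0, hveq⟩ := hlam.1
    set A := G.adjMatrix ℝ with hA_def
    set w : Fin n → ℝ := fun i => |v i| with hw_def
    have hw0 : ∀ i, 0 ≤ w i := fun i => abs_nonneg _
    have hww : w ⬝ᵥ w = v ⬝ᵥ v := by
      simp [dotProduct, hw_def, abs_mul_abs_self]
    have hs0 : 0 < w ⬝ᵥ w := by
      rw [hww]
      have hne : v ⬝ᵥ v ≠ 0 := fun hz => hv0 (dotProduct_self_eq_zero.1 hz)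
      have hnn : 0 ≤ v ⬝ᵥ v := Finset.sum_nonneg fun i _ => mul_self_nonneg _
      exact lt_of_le_of_ne hnn (Ne.symm hne)
    have hAvv : v ⬝ᵥ (A *ᵥ v) = lam1 * (v ⬝ᵥ v) := by
      rw [hveq, dotProduct_smul, smul_eq_mul]
    have hAw : lam1 * (w ⬝ᵥ w) ≤ w ⬝ᵥ (A *ᵥ w) := by
      have h2 : v ⬝ᵥ (A *ᵥ v) ≤ w ⬝ᵥ (A *ᵥ w) := by
        rw [dot_mulVec_eq, dot_mulVec_eq]
        refine Finset.sum_le_sum fun i _ => Finset.sum_le_sum fun j _ => ?_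
        have hvw : v i * v j ≤ w i * w j := by
          rw [hw_def]; simpa [abs_mul] using le_abs_self (v i * v j)
        calc A i j * v i * v j = A i j * (v i * v j) := by ring
          _ ≤ A i j * (w i * w j) := mul_le_mul_of_nonneg_left hvw (hA0 i j)
          _ = A i j * w i * w j := by ring
      rw [hww, ← hAvv]; exact h2
    set B := α • (1 : Matrix (Fin n) (Fin n) ℝ) + β • A with hB_def
    have hBmul : ∀ x : Fin n → ℝ, B *ᵥ x = α • x + β • (A *ᵥ x) := by
      intro x
      rw [hB_def, Matrix.add_mulVec, Matrix.smul_mulVec, Matrix.smul_mulVec,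
        Matrix.one_mulVec]
    have hQ : ∀ x : Fin n → ℝ, x ⬝ᵥ (B *ᵥ x) = α * (x ⬝ᵥ x) + β * (x ⬝ᵥ (A *ᵥ x)) := by
      intro x
      rw [hBmul]
      simp [dotProduct_add, dotProduct_smul, smul_eq_mul]
    have hBsymm : B.IsSymm := by
      rw [Matrix.IsSymm, hB_def]
      rw [Matrix.transpose_add, Matrix.transpose_smul, Matrix.transpose_smul,
        Matrix.transpose_one, (SimpleGraph.isSymm_adjMatrix G).eq]
    have hQw : 0 ≤ w ⬝ᵥ (B *ᵥ w) := by
      rw [hQ]; nlinarith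
    obtain ⟨i1, hi1⟩ : ∃ i, 0 < w i := by
      by_contra hcc; push_neg at hcc
      apply hv0; ext i
      have h5 := le_antisymm (hcc i) (hw0 i)
      have : |v i| = 0 := by rw [← h5, hw_def]
      simpa [abs_eq_zero] using this
    set Sw := ∑ i, w i with hSw_def
    have hSwpos : 0 < Sw := Finset.sum_pos' (fun i _ => hw0 i) ⟨i1, Finset.mem_univ i1, hi1⟩
    set C1 : ℝ := ∑ i, |(B *ᵥ w) i| with hC1_def
    have hC1nn : 0 ≤ C1 := Finset.sum_nonneg fun i _ => abs_nonneg _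
    -- the key construction
    have key : ∀ k : ℕ, ∃ ξ : Fin n → ℕ,
        (∀ m : ℕ, (m : ℝ) ≤ (k : ℝ) * w i1 → m ≤ ξ i1) ∧
        (k : ℝ) * Sw - n ≤ ∑ i, (ξ i : ℝ) ∧
        0 ≤ ∑ i, (ξ i : ℝ) ∧
        (k : ℝ) ^ 2 * (w ⬝ᵥ (B *ᵥ w)) - 2 * (k : ℝ) * C1 + α * n - α * (∑ i, (ξ i : ℝ))
          ≤ 2 * W G α β ξ := by
      intro k
      set ξ : Fin n → ℕ := fun i => ⌊(k : ℝ) * w i⌋₊ with hξ_def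
      set e : Fin n → ℝ := fun i => (k : ℝ) * w i - (ξ i : ℝ) with he_def
      have hkw0 : ∀ i, 0 ≤ (k : ℝ) * w i := fun i => mul_nonneg (Nat.cast_nonneg k) (hw0 i)
      have he0 : ∀ i, 0 ≤ e i := by
        intro i
        simp only [he_def, sub_nonneg, hξ_def]
        exact Nat.floor_le (hkw0 i)
      have he1 : ∀ i, e i ≤ 1 := by
        intro i
        have := Nat.lt_floor_add_one ((k : ℝ) * w i)
        simp only [he_def, hξ_def]
        push_cast
        linarith
      have hxi : (fun i => (ξ i : ℝ)) = (k : ℝ) • w - e := by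
        funext i; simp [he_def]
      refine ⟨ξ, ?_, ?_, ?_, ?_⟩
      · intro m hm
        exact Nat.le_floor hm
      · have h6 : ∀ i ∈ Finset.univ, (k : ℝ) * w i - 1 ≤ (ξ i : ℝ) := by
          intro i _
          have := he1 i
          simp only [he_def] at this
          linarith
        calc (k : ℝ) * Sw - n = ∑ i, ((k : ℝ) * w i - 1) := by
              rw [Finset.sum_sub_distrib, ← Finset.mul_sum, ← hSw_def]
              simp [Finset.card_univ]
          _ ≤ ∑ i, (ξ i : ℝ) := Finset.sum_le_sum h6
      · exact Finset.sum_nonneg fun i _ => Nat.cast_nonneg _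
      · -- main quadratic bound
        have hWB : W G α β ξ = ((fun i => (ξ i : ℝ)) ⬝ᵥ (B *ᵥ fun i => (ξ i : ℝ))) / 2
            - α / 2 * ∑ i, (ξ i : ℝ) := by
          rw [W_eq G α β ξ, hQ]
          have hdd : (fun i => (ξ i : ℝ)) ⬝ᵥ (fun i => (ξ i : ℝ)) = ∑ i, (ξ i : ℝ) ^ 2 := by
            simp [dotProduct, sq]
          rw [hdd]
        have hexp : ((k : ℝ) • w - e) ⬝ᵥ (B *ᵥ ((k : ℝ) • w - e))
            = (k : ℝ) ^ 2 * (w ⬝ᵥ (B *ᵥ w)) - 2 * (k : ℝ) * (e ⬝ᵥ (B *ᵥ w))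
              + e ⬝ᵥ (B *ᵥ e) := by
          rw [Matrix.mulVec_sub, Matrix.mulVec_smul]
          simp only [sub_dotProduct, dotProduct_sub, smul_dotProduct,
            dotProduct_smul, smul_eq_mul]
          have hsy := pair_symm hBsymm w e
          nlinarith [hsy]
        have hBe : α * n ≤ e ⬝ᵥ (B *ᵥ e) := by
          rw [hQ]
          have hee : e ⬝ᵥ e ≤ n := by
            have : ∀ i ∈ Finset.univ, e i * e i ≤ 1 := by
              intro i _; nlinarith [he0 i, he1 i]
            calc e ⬝ᵥ e = ∑ i, e i * e i := rfl
              _ ≤ ∑ _i : Fin n, (1 : ℝ) := Finset.sum_le_sum this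
              _ = n := by simp [Finset.card_univ]
          have heenn : 0 ≤ e ⬝ᵥ e := Finset.sum_nonneg fun i _ => mul_self_nonneg _
          have hAe : 0 ≤ e ⬝ᵥ (A *ᵥ e) := by
            rw [dot_mulVec_eq]
            exact Finset.sum_nonneg fun i _ => Finset.sum_nonneg fun j _ =>
              mul_nonneg (mul_nonneg (hA0 i j) (he0 i)) (he0 j)
          nlinarith
        have hBw : e ⬝ᵥ (B *ᵥ w) ≤ C1 := by
          rw [hC1_def]
          simp only [dotProduct]
          refine Finset.sum_le_sum fun i _ => ?_
          nlinarith [he0 i, he1 i, le_abs_self ((B *ᵥ w) i), neg_abs_le ((B *ᵥ w) i),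
            abs_nonneg ((B *ᵥ w) i)]
        rw [hWB, hxi, hexp]
        have hknn : (0 : ℝ) ≤ (k : ℝ) := Nat.cast_nonneg k
        nlinarith [mul_le_mul_of_nonneg_left hBw (by linarith : (0:ℝ) ≤ 2 * (k:ℝ))]
    -- now derive a contradiction using not_summable_helper
    refine absurd hs (not_summable_helper i1 ?_)
    intro m
    rcases eq_or_lt_of_le hQw with hQ0 | hQpos
    · -- w ⬝ᵥ B w = 0 : kernel case
      have hzero : α + β * lam1 = 0 := by
        have h7 : α * (w ⬝ᵥ w) + β * (w ⬝ᵥ (A *ᵥ w)) = 0 := by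
          rw [← hQ]; exact hQ0.symm
        nlinarith
      have hnsd : ∀ x : Fin n → ℝ, x ⬝ᵥ (B *ᵥ x) ≤ 0 := by
        intro x
        rw [hQ]
        have hxx : 0 ≤ x ⬝ᵥ x := Finset.sum_nonneg fun i _ => mul_self_nonneg _
        nlinarith [hray x]
      have hker : B *ᵥ w = 0 := kernel_of_nonpos hBsymm hnsd hQ0.symm
      have hC1z : C1 = 0 := by
        rw [hC1_def, hker]
        simp
      obtain ⟨k, hk⟩ := exists_nat_ge (max (2 * n / Sw) ((m : ℝ) / w i1))
      obtain ⟨ξ, hk1, hk2, hk3, hk4⟩ := key k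
      refine ⟨ξ, ?_, ?_⟩
      · apply hk1
        have h8 : (m : ℝ) / w i1 ≤ (k : ℝ) := le_trans (le_max_right _ _) hk
        rw [div_le_iff₀ hi1] at h8
        linarith
      · rw [Real.one_le_exp_iff]
        have h9 : (2 : ℝ) * n / Sw ≤ (k : ℝ) := le_trans (le_max_left _ _) hk
        rw [div_le_iff₀ hSwpos] at h9
        rw [← hQ0, hC1z] at hk4
        -- hk4 : 0 - 0 + α*n - α * Σ ≤ 2 * W
        have h10 : α * (∑ i, (ξ i : ℝ)) ≤ α * ((k : ℝ) * Sw - n) :=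
          mul_le_mul_of_nonpos_left hk2 (le_of_lt hα)
        nlinarith [mul_le_mul_of_nonpos_left h9 (le_of_lt hα)]
    · -- w ⬝ᵥ B w > 0
      obtain ⟨k, hk⟩ := exists_nat_ge (max (max 1 ((2 * C1 - α * n) / (w ⬝ᵥ (B *ᵥ w))))
        ((m : ℝ) / w i1))
      obtain ⟨ξ, hk1, hk2, hk3, hk4⟩ := key k
      refine ⟨ξ, ?_, ?_⟩
      · apply hk1
        have h8 : (m : ℝ) / w i1 ≤ (k : ℝ) := le_trans (le_max_right _ _) hk
        rw [div_le_iff₀ hi1] at h8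
        linarith
      · rw [Real.one_le_exp_iff]
        have h9 : (1 : ℝ) ≤ (k : ℝ) := le_trans ((le_max_left _ _).trans (le_max_left _ _)) hk
        have h10 : (2 * C1 - α * n) / (w ⬝ᵥ (B *ᵥ w)) ≤ (k : ℝ) :=
          le_trans ((le_max_right _ _).trans (le_max_left _ _)) hk
        rw [div_le_iff₀ hQpos] at h10
        have h11 : α * (∑ i, (ξ i : ℝ)) ≤ 0 :=
          mul_nonpos_of_nonpos_of_nonneg (le_of_lt hα) hk3
        nlinarith [hk4, h11, mul_le_mul_of_nonneg_left h10 (by linarith : (0:ℝ) ≤ (k:ℝ)),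
          mul_nonneg (mul_nonneg (by linarith : (0:ℝ) ≤ -α) (Nat.cast_nonneg n))
            (by linarith : (0:ℝ) ≤ (k:ℝ) - 1)]
  · -- conditions → summable
    rintro ⟨hα, hcond⟩
    obtain ⟨c, hc0, hWb⟩ : ∃ c : ℝ, c < 0 ∧ ∀ ξ : Fin n → ℕ,
        W G α β ξ ≤ ∑ i, (c / 2 * (ξ i : ℝ) ^ 2 + (-α / 2) * (ξ i : ℝ)) := by
      rcases le_or_gt β 0 with hβ | hβ
      · refine ⟨α, hα, fun ξ => ?_⟩
        unfold W
        have hd : 0 ≤ ∑ i, ∑ j, G.adjMatrix ℝ i j * (ξ i : ℝ) * (ξ j : ℝ) :=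
          Finset.sum_nonneg fun i _ => Finset.sum_nonneg fun j _ =>
            mul_nonneg (mul_nonneg (hA0 i j) (Nat.cast_nonneg _)) (Nat.cast_nonneg _)
        have h1 : ∑ i, (ξ i : ℝ) * ((ξ i : ℝ) - 1)
            = ∑ i, ((ξ i : ℝ) ^ 2 - (ξ i : ℝ)) :=
          Finset.sum_congr rfl fun i _ => by ring
        have h2 : ∑ i, (α / 2 * (ξ i : ℝ) ^ 2 + (-α / 2) * (ξ i : ℝ))
            = α / 2 * ∑ i, ((ξ i : ℝ) ^ 2 - (ξ i : ℝ)) := by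
          rw [Finset.mul_sum]
          exact Finset.sum_congr rfl fun i _ => by ring
        rw [h1, h2]
        nlinarith
      · refine ⟨α + β * lam1, hcond, fun ξ => ?_⟩
        have hr := hray (fun i => (ξ i : ℝ))
        rw [dot_mulVec_eq] at hr
        have hdd : (fun i => (ξ i : ℝ)) ⬝ᵥ (fun i => (ξ i : ℝ)) = ∑ i, (ξ i : ℝ) ^ 2 := by
          simp [dotProduct, sq]
        rw [hdd] at hr
        unfold W
        have h1 : ∑ i, (ξ i : ℝ) * ((ξ i : ℝ) - 1)
            = ∑ i, (ξ i : ℝ) ^ 2 - ∑ i, (ξ i : ℝ) := by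
          rw [← Finset.sum_sub_distrib]
          exact Finset.sum_congr rfl fun i _ => by ring
        have h2 : ∑ i, ((α + β * lam1) / 2 * (ξ i : ℝ) ^ 2 + (-α / 2) * (ξ i : ℝ))
            = (α + β * lam1) / 2 * ∑ i, (ξ i : ℝ) ^ 2 + (-α / 2) * ∑ i, (ξ i : ℝ) := by
          rw [Finset.sum_add_distrib, ← Finset.mul_sum, ← Finset.mul_sum]
        rw [h1, h2]
        nlinarith
    have hf := summable_exp_quad (c / 2) (-α / 2) (by linarith)
    have hpi := summable_prod_pi (f := fun k : ℕ => Real.exp (c / 2 * (k : ℝ) ^ 2 + (-α / 2) * k))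
      (fun k => le_of_lt (Real.exp_pos _)) hf n
    refine Summable.of_nonneg_of_le (fun ξ => le_of_lt (Real.exp_pos _)) (fun ξ => ?_) hpi
    rw [← Real.exp_sum]
    exact Real.exp_le_exp.2 (hWb ξ)

end Aux
end

section
/- Define φ, ψ : ℝ → ℝ by φ(u) := e^u + 1 and ψ(u) := u(e^u − 1), and Φ, Ψ : ℝⁿ → ℝ by Φ(u) := Σ_{i=1}^n φ(uᵢ) and Ψ(u) := Σ_{i=1}^n ψ(uᵢ). Then Ψ(u)/Φ(u) → +∞ as ‖u‖ → ∞; that is, for every B > 0 there exists M such that Ψ(u)/Φ(u) > B whenever ‖u‖ > M. -/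
open Finset Real

lemma psi_key (t : ℝ) : (|t| - 2) * (Real.exp t + 1) ≤ t * (Real.exp t - 1) := by
  have h1 := Real.add_one_le_exp t
  have h2 := Real.add_one_le_exp (-t)
  have h3 := Real.exp_pos t
  have h4 : Real.exp t * Real.exp (-t) = 1 := by
    rw [← Real.exp_add]; simp
  have h5 : Real.exp t * (-t + 1) ≤ Real.exp t * Real.exp (-t) :=
    mul_le_mul_of_nonneg_left h2 h3.le
  rcases abs_cases t with ⟨h, _⟩ | ⟨h, _⟩ <;> rw [h] <;> nlinarith

lemma psi_nonneg (t : ℝ) : 0 ≤ t * (Real.exp t - 1) := by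
  rcases le_or_gt 0 t with h | h
  · exact mul_nonneg h (by nlinarith [Real.add_one_le_exp t])
  · have h1 : Real.exp t < 1 := Real.exp_lt_one_iff.mpr h
    nlinarith [mul_pos (neg_pos.mpr h) (by linarith : (0:ℝ) < 1 - Real.exp t)]

set_option maxHeartbeats 1000000 in
/-- With `φ(u) = e^u + 1`, `ψ(u) = u(e^u − 1)`, `Φ(u) = Σᵢ φ(uᵢ)`, `Ψ(u) = Σᵢ ψ(uᵢ)`,
the ratio `Ψ(u)/Φ(u) → +∞` as `‖u‖ → ∞`: for every `B > 0` there is `M` with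
`Ψ(u)/Φ(u) > B` whenever `‖u‖ > M`. -/
theorem stmt5 {n : ℕ} (hn : 1 ≤ n) (B : ℝ) (hB : 0 < B) :
    ∃ M : ℝ, ∀ u : EuclideanSpace ℝ (Fin n), M < ‖u‖ →
      B < (∑ i, u i * (Real.exp (u i) - 1)) / (∑ i, (Real.exp (u i) + 1)) := by
  haveI : Nonempty (Fin n) := ⟨⟨0, hn⟩⟩
  set C : ℝ := (2 + B) * (Real.exp (2 + B) + 1) with hC
  have hCpos : 0 < C := by positivity
  set a : ℝ := 2 + B + n * C with ha
  have hn1 : (1 : ℝ) ≤ n := by exact_mod_cast hn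
  have hapos : 0 < a := by positivity
  refine ⟨n * a, fun u hu => ?_⟩
  -- pointwise lower bound
  have hlow : ∀ t : ℝ, -C ≤ t * (Real.exp t - 1) - B * (Real.exp t + 1) := by
    intro t
    have hφ : 0 < Real.exp t + 1 := by positivity
    rcases le_or_gt (2 + B) |t| with h | h
    · have hk := psi_key t
      have hmm : 0 ≤ (|t| - 2 - B) * (Real.exp t + 1) :=
        mul_nonneg (by linarith) hφ.le
      linarith
    · have hψ := psi_nonneg t
      have het : Real.exp t ≤ Real.exp (2 + B) := by
        apply Real.exp_le_exp.mpr
        calc t ≤ |t| := le_abs_self t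
          _ ≤ 2 + B := h.le
      have hBe : B * Real.exp t ≤ B * Real.exp (2 + B) :=
        mul_le_mul_of_nonneg_left het hB.le
      nlinarith [Real.exp_pos (2 + B)]
  have hne : (Finset.univ : Finset (Fin n)).Nonempty := Finset.univ_nonempty
  have hΦpos : 0 < ∑ i, (Real.exp (u i) + 1) :=
    Finset.sum_pos (fun i _ => by positivity) hne
  have hnR : (0 : ℝ) < n := by linarith
  -- find a big coordinate
  obtain ⟨i₀, -, hi₀⟩ : ∃ i ∈ Finset.univ, (∑ j, u j ^ 2) / n ≤ u i ^ 2 := by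
    apply Finset.exists_le_of_sum_le hne
    rw [Finset.sum_const, nsmul_eq_mul, Finset.card_univ, Fintype.card_fin]
    rw [mul_div_cancel₀ _ (ne_of_gt hnR)]
  have hnorm : ‖u‖ ^ 2 = ∑ i, (u i) ^ 2 := by
    rw [EuclideanSpace.norm_eq, Real.sq_sqrt (by positivity)]
    simp [Real.norm_eq_abs, sq_abs]
  have hMpos : 0 < (n : ℝ) * a := by positivity
  have hsq : ((n : ℝ) * a) ^ 2 < ‖u‖ ^ 2 := by nlinarith [norm_nonneg u]
  have hSig : (∑ j, u j ^ 2) ≤ u i₀ ^ 2 * n := (div_le_iff₀ hnR).mp hi₀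
  have hbig : a < |u i₀| := by
    by_contra hcon
    push_neg at hcon
    have h1 : u i₀ ^ 2 ≤ a ^ 2 := by nlinarith [sq_abs (u i₀), abs_nonneg (u i₀)]
    have h4 : ((n : ℝ) * a) ^ 2 < u i₀ ^ 2 * n := by
      rw [hnorm] at hsq; linarith
    nlinarith [mul_le_mul_of_nonneg_right h1 hnR.le, sq_nonneg a, hapos, hn1]
  -- sum bound
  set g : Fin n → ℝ := fun i => u i * (Real.exp (u i) - 1) - B * (Real.exp (u i) + 1)
    with hg
  have hsum : 0 < ∑ i, g i := by
    have hsplit : ∑ i, g i = g i₀ + ∑ i ∈ Finset.univ.erase i₀, g i :=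
      (Finset.add_sum_erase _ g (Finset.mem_univ i₀)).symm
    have hrest : -((n : ℝ) * C) ≤ ∑ i ∈ Finset.univ.erase i₀, g i := by
      have h1 : ∑ i ∈ Finset.univ.erase i₀, (-C) ≤ ∑ i ∈ Finset.univ.erase i₀, g i :=
        Finset.sum_le_sum fun i _ => hlow (u i)
      have hcard : ((Finset.univ.erase i₀).card : ℝ) ≤ n := by
        have h := Finset.card_erase_le (s := (Finset.univ : Finset (Fin n))) (a := i₀)
        rw [Finset.card_univ, Fintype.card_fin] at h
        exact_mod_cast h
      have h2 : ∑ i ∈ Finset.univ.erase i₀, (-C)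
          = -(((Finset.univ.erase i₀).card : ℝ) * C) := by
        rw [Finset.sum_const, nsmul_eq_mul]; ring
      rw [h2] at h1
      nlinarith
    have hg0 : (n : ℝ) * C < g i₀ := by
      have hk := psi_key (u i₀)
      have hφ : 1 ≤ Real.exp (u i₀) + 1 := by
        nlinarith [Real.exp_pos (u i₀)]
      have hpos : 0 < |u i₀| - 2 - B := by
        have hnC : 0 ≤ (n : ℝ) * C := by positivity
        simp only [ha] at hbig; linarith
      have hmul : (|u i₀| - 2 - B) * 1 ≤ (|u i₀| - 2 - B) * (Real.exp (u i₀) + 1) :=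
        mul_le_mul_of_nonneg_left hφ hpos.le
      have hB' : (n : ℝ) * C < |u i₀| - 2 - B := by
        simp only [ha] at hbig; linarith
      show (n : ℝ) * C < u i₀ * (Real.exp (u i₀) - 1) - B * (Real.exp (u i₀) + 1)
      nlinarith
    linarith
  have hsplit2 : ∑ i, g i
      = (∑ i, u i * (Real.exp (u i) - 1)) - B * ∑ i, (Real.exp (u i) + 1) := by
    simp only [hg]
    rw [Finset.sum_sub_distrib, Finset.mul_sum]
  rw [lt_div_iff₀ hΦpos]
  rw [hsplit2] at hsum
  linarith
end

section
/- Suppose α < 0, β ≥ 0 and α + β λ₁(G) < 0. Then there exist constants c > 0 and C > 0 such that for every ξ ∈ ℤ₊ⁿ, e^{W(ξ)} ≤ C e^{−c S(ξ)²}. In fact one may show W(ξ) ≤ ((α + β λ₁(G))/(2n)) S(ξ)² + (|α|/2) S(ξ) for all ξ ∈ ℤ₊ⁿ. -/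
open Finset Real
open Matrix


lemma rayleigh_le {n : ℕ} (A : Matrix (Fin n) (Fin n) ℝ) (hA : A.IsHermitian) (lam1 : ℝ)
    (hub : ∀ μ : ℝ, (∃ v : Fin n → ℝ, v ≠ 0 ∧ A.mulVec v = μ • v) → μ ≤ lam1)
    (x : Fin n → ℝ) : x ⬝ᵥ A *ᵥ x ≤ lam1 * (x ⬝ᵥ x) := by
  classical
  set U : Matrix (Fin n) (Fin n) ℝ := (Matrix.IsHermitian.eigenvectorUnitary hA : Matrix (Fin n) (Fin n) ℝ) with hU
  have hUU : U * star U = 1 := (Matrix.mem_unitaryGroup_iff).mp (Matrix.IsHermitian.eigenvectorUnitary hA).2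
  set y : Fin n → ℝ := (star U) *ᵥ x with hy
  have hxU : x ᵥ* U = y := by
    rw [hy, ← Matrix.vecMul_transpose, Matrix.star_eq_conjTranspose, Matrix.conjTranspose_eq_transpose_of_trivial, Matrix.transpose_transpose]
  have h1 : x ⬝ᵥ A *ᵥ x = ∑ i, hA.eigenvalues i * (y i)^2 := by
    conv_lhs => rw [hA.spectral_theorem, Unitary.conjStarAlgAut_apply]
    rw [← Matrix.mulVec_mulVec, ← Matrix.mulVec_mulVec, Matrix.dotProduct_mulVec, hxU]
    simp only [dotProduct, Matrix.mulVec_diagonal, hy, Function.comp,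
      RCLike.ofReal_real_eq_id, id_eq]
    exact Finset.sum_congr rfl fun i _ => by ring
  have h2 : x ⬝ᵥ x = ∑ i, (y i)^2 := by
    have : y ⬝ᵥ y = x ⬝ᵥ x := by
      have hUUt : U * Uᵀ = 1 := by
        rwa [Matrix.star_eq_conjTranspose, Matrix.conjTranspose_eq_transpose_of_trivial] at hUU
      rw [hy, Matrix.dotProduct_mulVec, ← Matrix.mulVec_transpose, Matrix.star_eq_conjTranspose,
        Matrix.conjTranspose_eq_transpose_of_trivial, Matrix.transpose_transpose,
        Matrix.mulVec_mulVec, hUUt, Matrix.one_mulVec]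
    rw [← this]
    simp [dotProduct, sq]
  have hev : ∀ i, hA.eigenvalues i ≤ lam1 := by
    intro i
    refine hub _ ⟨⇑(hA.eigenvectorBasis i), ?_, hA.mulVec_eigenvectorBasis i⟩
    intro h
    exact hA.eigenvectorBasis.orthonormal.ne_zero i (by ext k; exact congrFun h k)
  rw [h1, h2, Finset.mul_sum]
  exact Finset.sum_le_sum fun i _ => mul_le_mul_of_nonneg_right (hev i) (sq_nonneg _)

/-- If `α < 0`, `β ≥ 0` and `α + β λ₁(G) < 0`, then there are `c, C > 0` with
`e^{W(ξ)} ≤ C e^{−c S(ξ)²}` for all `ξ`; in fact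
`W(ξ) ≤ ((α + β λ₁(G))/(2n)) S(ξ)² + (|α|/2) S(ξ)`. -/
theorem stmt8 {n : ℕ} (hn : 0 < n) (G : SimpleGraph (Fin n)) [DecidableRel G.Adj]
    (α β : ℝ) (hα : α < 0) (hβ : 0 ≤ β) (lam1 : ℝ)
    (hlam : IsGreatest
      {μ : ℝ | ∃ v : Fin n → ℝ, v ≠ 0 ∧ (G.adjMatrix ℝ).mulVec v = μ • v} lam1)
    (hcrit : α + β * lam1 < 0) :
    (∃ c : ℝ, 0 < c ∧ ∃ C : ℝ, 0 < C ∧ ∀ ξ : Fin n → ℕ,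
        Real.exp (W G α β ξ) ≤ C * Real.exp (-c * (∑ i, (ξ i : ℝ)) ^ 2))
    ∧ ∀ ξ : Fin n → ℕ,
        W G α β ξ ≤ (α + β * lam1) / (2 * n) * (∑ i, (ξ i : ℝ)) ^ 2
          + |α| / 2 * ∑ i, (ξ i : ℝ) := by
  classical
  have hn' : (0 : ℝ) < n := Nat.cast_pos.mpr hn
  set A : Matrix (Fin n) (Fin n) ℝ := G.adjMatrix ℝ with hAdef
  have hA : A.IsHermitian := by
    rw [Matrix.IsHermitian, Matrix.conjTranspose_eq_transpose_of_trivial, hAdef,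
      SimpleGraph.transpose_adjMatrix]
  have hray := rayleigh_le A hA lam1 (fun μ hμ => hlam.2 hμ)
  have part2 : ∀ ξ : Fin n → ℕ,
      W G α β ξ ≤ (α + β * lam1) / (2 * n) * (∑ i, (ξ i : ℝ)) ^ 2
        + |α| / 2 * ∑ i, (ξ i : ℝ) := by
    intro ξ
    set x : Fin n → ℝ := fun i => (ξ i : ℝ) with hx
    set S : ℝ := ∑ i, x i with hS
    set Q : ℝ := ∑ i, (x i) ^ 2 with hQdef
    have hsum1 : ∑ i, (ξ i : ℝ) * ((ξ i : ℝ) - 1) = Q - S := by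
      rw [hQdef, hS, ← Finset.sum_sub_distrib]
      exact Finset.sum_congr rfl fun i _ => by ring
    have hsum2 : ∑ i, ∑ j, G.adjMatrix ℝ i j * (ξ i : ℝ) * (ξ j : ℝ) = x ⬝ᵥ A *ᵥ x := by
      simp only [dotProduct, Matrix.mulVec, Finset.mul_sum]
      exact Finset.sum_congr rfl fun i _ => Finset.sum_congr rfl fun j _ => by
        simp only [hx]; ring
    have hxx : x ⬝ᵥ x = Q := by
      rw [hQdef]
      exact Finset.sum_congr rfl fun i _ => (sq (x i)).symm
    have hr : x ⬝ᵥ A *ᵥ x ≤ lam1 * Q := by rw [← hxx]; exact hray x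
    have hCS : S ^ 2 ≤ n * Q := by
      have := sq_sum_le_card_mul_sum_sq (s := (Finset.univ : Finset (Fin n))) (f := x)
      simpa [hS, hQdef] using this
    have key : (α + β * lam1) / 2 * Q ≤ (α + β * lam1) / (2 * n) * S ^ 2 := by
      rw [div_mul_eq_mul_div, div_mul_eq_mul_div, div_le_div_iff₀ (by norm_num) (by positivity)]
      nlinarith [mul_nonneg (le_of_lt (neg_pos.mpr hcrit)) (sub_nonneg.mpr hCS)]
    have habs : |α| = -α := abs_of_neg hα
    have hquad : β / 2 * (x ⬝ᵥ A *ᵥ x) ≤ β / 2 * (lam1 * Q) :=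
      mul_le_mul_of_nonneg_left hr (by positivity)
    have : W G α β ξ = α / 2 * (Q - S) + β / 2 * (x ⬝ᵥ A *ᵥ x) := by
      rw [W, hsum1, hsum2]
    rw [this, habs]
    nlinarith [key, hquad]
  refine ⟨?_, part2⟩
  set a : ℝ := (α + β * lam1) / (2 * n) with ha
  have ha0 : a < 0 := div_neg_of_neg_of_pos hcrit (by positivity)
  set b : ℝ := |α| / 2 with hb
  have hb0 : 0 ≤ b := by positivity
  refine ⟨-a / 2, by linarith, Real.exp (b ^ 2 / (2 * (-a))), Real.exp_pos _, fun ξ => ?_⟩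
  set S : ℝ := ∑ i, (ξ i : ℝ) with hS
  have hK : a / 2 * S ^ 2 + b * S ≤ b ^ 2 / (2 * (-a)) := by
    rw [le_div_iff₀ (by linarith : (0:ℝ) < 2 * (-a))]
    nlinarith [sq_nonneg (a * S + b)]
  have hW : W G α β ξ ≤ b ^ 2 / (2 * (-a)) + -(-a / 2) * S ^ 2 := by
    have h2 : W G α β ξ ≤ a * S ^ 2 + b * S := part2 ξ
    nlinarith [hK, h2]
  calc Real.exp (W G α β ξ) ≤ Real.exp (b ^ 2 / (2 * (-a)) + -(-a / 2) * S ^ 2) :=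
        Real.exp_le_exp.mpr hW
    _ = Real.exp (b ^ 2 / (2 * (-a))) * Real.exp (-(-a / 2) * S ^ 2) := Real.exp_add _ _
end

section
/- Suppose the independence number of G satisfies κ(G) ≤ 2, and let b > 0. Then there exists a constant C = C(n, b) < ∞ such that for every integer L ≥ 1, Σ_{ξ ∈ ℤ₊ⁿ : S(ξ) = L} exp(−b Σ_{{i,j} : i ∼ j} ξᵢ ξⱼ) ≤ C · L. (This is the total conductance between levels L−1 and L in the network for α = 0, β = −b.) -/
open Finset Real
open scoped ENNReal

/-- Product over a pi type factorizes the tsum. -/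
private lemma tsum_pi_pow : ∀ (m : ℕ) (g : ℕ → ℝ≥0∞),
    (∑' η : Fin m → ℕ, ∏ j, g (η j)) = (∑' k, g k) ^ m := by
  intro m
  induction m with
  | zero =>
    intro g
    simp only [Finset.univ_eq_empty, Finset.prod_empty, pow_zero]
    rw [tsum_eq_single (fun i : Fin 0 => 0) (by intro ξ h; exact absurd (funext fun i => i.elim0) (Ne.symm h))]
  | succ m ih =>
    intro g
    have he := (Fin.consEquiv (fun _ : Fin (m + 1) => ℕ)).tsum_eq
      (fun η : Fin (m + 1) → ℕ => ∏ j, g (η j))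
    rw [← he]
    have : ∀ p : ℕ × (Fin m → ℕ),
        (∏ j, g ((Fin.consEquiv (fun _ : Fin (m + 1) => ℕ)) p j))
          = g p.1 * ∏ j : Fin m, g (p.2 j) := by
      intro p
      rw [Fin.prod_univ_succ]
      simp [Fin.consEquiv]
    calc (∑' p : ℕ × (Fin m → ℕ),
            ∏ j, g ((Fin.consEquiv (fun _ : Fin (m + 1) => ℕ)) p j))
        = ∑' p : ℕ × (Fin m → ℕ), g p.1 * ∏ j : Fin m, g (p.2 j) := by
          exact tsum_congr this
      _ = ∑' k : ℕ, ∑' η : Fin m → ℕ, g k * ∏ j : Fin m, g (η j) := by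
          rw [ENNReal.tsum_prod']
      _ = ∑' k : ℕ, g k * ∑' η : Fin m → ℕ, ∏ j : Fin m, g (η j) := by
          congr 1; funext k; rw [ENNReal.tsum_mul_left]
      _ = (∑' k, g k) * (∑' k, g k) ^ m := by
          rw [ih g, ← ENNReal.tsum_mul_right]
      _ = (∑' k, g k) ^ (m + 1) := by rw [pow_succ]; ring

private lemma adj_entry_nonneg {n : ℕ} (G : SimpleGraph (Fin n)) [DecidableRel G.Adj]
    (ξ : Fin n → ℕ) (i j : Fin n) :
    0 ≤ G.adjMatrix ℝ i j * (ξ i : ℝ) * (ξ j : ℝ) := by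
  rw [SimpleGraph.adjMatrix_apply]
  split_ifs <;> positivity

private lemma energy_nonneg {n : ℕ} (G : SimpleGraph (Fin n)) [DecidableRel G.Adj]
    (ξ : Fin n → ℕ) :
    0 ≤ 1 / 2 * ∑ i, ∑ j, G.adjMatrix ℝ i j * (ξ i : ℝ) * (ξ j : ℝ) := by
  have h : 0 ≤ ∑ i, ∑ j, G.adjMatrix ℝ i j * (ξ i : ℝ) * (ξ j : ℝ) := by
    refine Finset.sum_nonneg fun i _ => Finset.sum_nonneg fun j _ => ?_
    exact adj_entry_nonneg G ξ i j
  linarith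

private lemma energy_ge {n : ℕ} (G : SimpleGraph (Fin n)) [DecidableRel G.Adj]
    (ξ : Fin n → ℕ) (u v : Fin n) (h : G.Adj u v) :
    ((ξ u * ξ v : ℕ) : ℝ) ≤ 1 / 2 * ∑ i, ∑ j, G.adjMatrix ℝ i j * (ξ i : ℝ) * (ξ j : ℝ) := by
  have hne : u ≠ v := G.ne_of_adj h
  have key : (2 : ℝ) * ((ξ u : ℝ) * (ξ v : ℝ))
      ≤ ∑ i, ∑ j, G.adjMatrix ℝ i j * (ξ i : ℝ) * (ξ j : ℝ) := by
    rw [← Finset.sum_product']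
    have hsub : ({(u, v), (v, u)} : Finset (Fin n × Fin n)) ⊆ Finset.univ ×ˢ Finset.univ := by
      intro x _; simp
    have hle := Finset.sum_le_sum_of_subset_of_nonneg hsub
      (fun p _ _ => adj_entry_nonneg G ξ p.1 p.2)
    refine le_trans (le_of_eq ?_) hle
    rw [Finset.sum_pair (by simp [hne] : ((u, v) : Fin n × Fin n) ≠ (v, u))]
    simp only [SimpleGraph.adjMatrix_apply, if_pos h, if_pos h.symm]
    ring
  push_cast
  linarith

private lemma edge_exists {n : ℕ} (G : SimpleGraph (Fin n)) [DecidableRel G.Adj]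
    (hκ : ∀ s : Finset (Fin n), (∀ i ∈ s, ∀ j ∈ s, i ≠ j → ¬G.Adj i j) → s.card ≤ 2)
    (ξ : Fin n → ℕ)
    (h3 : 2 < (Finset.univ.filter fun t => ξ t ≠ 0).card)
    (i : Fin n) (hi : ∀ j, ξ j ≤ ξ i) :
    ∃ u v, G.Adj u v ∧ Finset.univ.sup (Function.update ξ i 0) ≤ ξ u * ξ v := by
  set s := Finset.univ.filter fun t => ξ t ≠ 0 with hs
  set η := Function.update ξ i 0 with hη
  set a := Finset.univ.sup η with ha
  -- a second-largest witness
  have hn0 : 0 < n := by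
    rcases Nat.eq_zero_or_pos n with h | h
    · exfalso; subst h; simp [hs] at h3
    · exact h
  obtain ⟨i2, -, hi2⟩ := Finset.exists_mem_eq_sup Finset.univ
    ⟨i, Finset.mem_univ i⟩ η
  -- a ≥ 1
  have hserase : 0 < (s.erase i).card := by
    have := Finset.pred_card_le_card_erase (s := s) (a := i)
    omega
  obtain ⟨t, ht⟩ := Finset.card_pos.mp hserase
  have hti : t ≠ i := Finset.ne_of_mem_erase ht
  have hts : t ∈ s := Finset.mem_of_mem_erase ht
  have htξ : ξ t ≠ 0 := by
    simpa [hs] using hts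
  have ha1 : 1 ≤ a := by
    have h1 : η t = ξ t := Function.update_of_ne hti 0 ξ
    have h2 : η t ≤ a := Finset.le_sup (Finset.mem_univ t)
    omega
  have hi2i : i2 ≠ i := by
    intro h
    rw [h] at hi2
    have : η i = 0 := Function.update_self i 0 ξ
    omega
  have hξi2 : ξ i2 = a := by
    have : η i2 = ξ i2 := Function.update_of_ne hi2i 0 ξ
    omega
  -- third vertex
  have hserase2 : 0 < ((s.erase i).erase i2).card := by
    have h1 := Finset.pred_card_le_card_erase (s := s.erase i) (a := i2)
    have h2 := Finset.pred_card_le_card_erase (s := s) (a := i)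
    omega
  obtain ⟨i3, hi3⟩ := Finset.card_pos.mp hserase2
  have hi32 : i3 ≠ i2 := Finset.ne_of_mem_erase hi3
  have hi3i : i3 ≠ i := Finset.ne_of_mem_erase (Finset.mem_of_mem_erase hi3)
  have hi3s : i3 ∈ s := Finset.mem_of_mem_erase (Finset.mem_of_mem_erase hi3)
  have hi3ξ : 1 ≤ ξ i3 := by
    have : ξ i3 ≠ 0 := by simpa [hs] using hi3s
    omega
  -- the triangle
  set T : Finset (Fin n) := {i, i2, i3} with hT
  have hTcard : T.card = 3 := by
    rw [hT]
    rw [Finset.card_insert_of_notMem (by simp [hi2i.symm, hi3i.symm]),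
      Finset.card_insert_of_notMem (by simp [hi32.symm]), Finset.card_singleton]
  have hnotindep : ¬(∀ u ∈ T, ∀ v ∈ T, u ≠ v → ¬G.Adj u v) := by
    intro h
    have := hκ T h
    omega
  push_neg at hnotindep
  obtain ⟨u, hu, v, hv, huv, hadj⟩ := hnotindep
  refine ⟨u, v, hadj, ?_⟩
  have hpos : ∀ x ∈ T, 1 ≤ ξ x := by
    intro x hx
    rw [hT] at hx
    simp only [Finset.mem_insert, Finset.mem_singleton] at hx
    rcases hx with h | h | h
    · subst h; exact le_trans hi3ξ (hi i3)
    · subst h; omega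
    · subst h; exact hi3ξ
  have hge : ∀ x ∈ T, x ≠ i3 → a ≤ ξ x := by
    intro x hx hx3
    rw [hT] at hx
    simp only [Finset.mem_insert, Finset.mem_singleton] at hx
    rcases hx with h | h | h
    · subst h; exact le_trans (le_of_eq hξi2.symm) (hi i2)
    · subst h; omega
    · exact absurd h hx3
  by_cases hu3 : u = i3
  · have hv3 : v ≠ i3 := by rw [hu3] at huv; exact fun h => huv h.symm
    calc a ≤ ξ v := hge v hv hv3
      _ ≤ ξ u * ξ v := Nat.le_mul_of_pos_left _ (hpos u hu)
  · calc a ≤ ξ u := hge u hu hu3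
      _ ≤ ξ u * ξ v := Nat.le_mul_of_pos_right _ (hpos v hv)

/-- If the independence number of `G` is at most `2` and `b > 0`, then there is a constant
`C = C(n,b) < ∞` such that for every `L ≥ 1`,
`Σ_{ξ ∈ ℤ₊ⁿ : S(ξ) = L} exp(−b Σ_{edges i∼j} ξᵢξⱼ) ≤ C·L`.
The edge sum is written as half the double sum over the adjacency matrix. -/
theorem stmt9 {n : ℕ} (G : SimpleGraph (Fin n)) [DecidableRel G.Adj]
    (hκ : ∀ s : Finset (Fin n), (∀ i ∈ s, ∀ j ∈ s, i ≠ j → ¬G.Adj i j) → s.card ≤ 2)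
    (b : ℝ) (hb : 0 < b) :
    ∃ C : ℝ, ∀ L : ℕ, 1 ≤ L →
      (∑' ξ : Fin n → ℕ,
          if (∑ i, ξ i) = L then
            ENNReal.ofReal (Real.exp
              (-b * (1 / 2 * ∑ i, ∑ j, G.adjMatrix ℝ i j * (ξ i : ℝ) * (ξ j : ℝ))))
          else 0)
        ≤ ENNReal.ofReal (C * L) := by
  classical
  rcases Nat.eq_zero_or_pos n with hn | hn
  · -- n = 0 : the sum is zero
    refine ⟨1, fun L hL => ?_⟩
    have hzero : ∀ ξ : Fin n → ℕ, (if (∑ i, ξ i) = L then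
        ENNReal.ofReal (Real.exp
          (-b * (1 / 2 * ∑ i, ∑ j, G.adjMatrix ℝ i j * (ξ i : ℝ) * (ξ j : ℝ))))
        else 0) = 0 := by
      intro ξ
      rw [if_neg]
      subst hn
      simp
      omega
    simp only [hzero, tsum_zero]
    exact zero_le
  -- main case n ≥ 1
  set E : (Fin n → ℕ) → ℝ :=
    fun ξ => 1 / 2 * ∑ i, ∑ j, G.adjMatrix ℝ i j * (ξ i : ℝ) * (ξ j : ℝ) with hE
  set w : (Fin n → ℕ) → ℝ≥0∞ := fun ξ => ENNReal.ofReal (Real.exp (-b * E ξ)) with hw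
  set r : ℝ≥0∞ := ENNReal.ofReal (Real.exp (-(b / n))) with hr
  have hn' : (0 : ℝ) < n := by exact_mod_cast hn
  have hbn : (0 : ℝ) < b / n := div_pos hb hn'
  have hr1 : r < 1 := by
    rw [hr, ← ENNReal.ofReal_one]
    exact (ENNReal.ofReal_lt_ofReal_iff one_pos).mpr
      (Real.exp_lt_one_iff.mpr (neg_lt_zero.mpr hbn))
  set K : ℝ≥0∞ := (1 - r)⁻¹ with hK
  have h1r : (1 : ℝ≥0∞) - r ≠ 0 := by
    intro h
    rw [tsub_eq_zero_iff_le] at h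
    exact absurd h (not_le.mpr hr1)
  have hKne : K ≠ ⊤ := ENNReal.inv_ne_top.mpr h1r
  set M : ℝ≥0∞ := 2 * (n : ℝ≥0∞) ^ 2 + (n : ℝ≥0∞) * K ^ n with hM
  have hMne : M ≠ ⊤ := by
    rw [hM]
    refine ENNReal.add_ne_top.mpr ⟨?_, ?_⟩
    · exact ENNReal.mul_ne_top (by simp) (ENNReal.pow_ne_top (ENNReal.natCast_ne_top n))
    · exact ENNReal.mul_ne_top (ENNReal.natCast_ne_top n) (ENNReal.pow_ne_top hKne)
  -- maxima
  have hexmax : ∀ ξ : Fin n → ℕ, ∃ i, ∀ j, ξ j ≤ ξ i := by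
    intro ξ
    obtain ⟨i, -, h⟩ := Finset.exists_max_image Finset.univ ξ ⟨⟨0, hn⟩, Finset.mem_univ _⟩
    exact ⟨i, fun j => h j (Finset.mem_univ j)⟩
  set iM : (Fin n → ℕ) → Fin n := fun ξ => (hexmax ξ).choose with hiM
  have hiMspec : ∀ (ξ : Fin n → ℕ) (j), ξ j ≤ ξ (iM ξ) := fun ξ => (hexmax ξ).choose_spec
  refine ⟨M.toReal, fun L hL => ?_⟩
  have hL1 : (1 : ℝ≥0∞) ≤ (L : ℝ≥0∞) := by exact_mod_cast hL
  set A : Set (Fin n → ℕ) :=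
    {ξ | (∑ i, ξ i) = L ∧ (Finset.univ.filter fun t => ξ t ≠ 0).card ≤ 2} with hA
  set B : Set (Fin n → ℕ) :=
    {ξ | (∑ i, ξ i) = L ∧ 2 < (Finset.univ.filter fun t => ξ t ≠ 0).card} with hB
  have hwle1 : ∀ ξ, w ξ ≤ 1 := by
    intro ξ
    rw [hw]
    refine ENNReal.ofReal_le_one.mpr (Real.exp_le_one_iff.mpr ?_)
    rw [neg_mul]
    exact neg_nonpos.mpr (mul_nonneg hb.le (energy_nonneg G ξ))
  have hsplit : ∀ ξ : Fin n → ℕ,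
      (if (∑ i, ξ i) = L then w ξ else 0)
        ≤ A.indicator (fun _ => 1) ξ + B.indicator w ξ := by
    intro ξ
    by_cases hs : (∑ i, ξ i) = L
    · rw [if_pos hs]
      by_cases hc : (Finset.univ.filter fun t => ξ t ≠ 0).card ≤ 2
      · have hAm : ξ ∈ A := ⟨hs, hc⟩
        rw [Set.indicator_of_mem hAm]
        exact le_trans (hwle1 ξ) le_self_add
      · have hBm : ξ ∈ B := ⟨hs, not_le.mp hc⟩
        rw [Set.indicator_of_mem hBm]
        exact le_add_self
    · rw [if_neg hs]; exact zero_le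
  -- A-part helpers
  have hsuppA : ∀ ξ : Fin n → ℕ, (∑ i, ξ i) = L →
      (Finset.univ.filter fun t => ξ t ≠ 0).Nonempty := by
    intro ξ hsum
    by_contra h
    rw [Finset.not_nonempty_iff_eq_empty, Finset.filter_eq_empty_iff] at h
    have hzero : (∑ i, ξ i) = 0 := Finset.sum_eq_zero fun i _ => by
      have := h (Finset.mem_univ i); simpa using this
    omega
  set iA : (Fin n → ℕ) → Fin n := fun ξ =>
    if h : (Finset.univ.filter fun t => ξ t ≠ 0).Nonempty
    then (Finset.univ.filter fun t => ξ t ≠ 0).min' h else ⟨0, hn⟩ with hiA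
  set jA : (Fin n → ℕ) → Fin n := fun ξ =>
    if h : (Finset.univ.filter fun t => ξ t ≠ 0).Nonempty
    then (Finset.univ.filter fun t => ξ t ≠ 0).max' h else ⟨0, hn⟩ with hjA
  have keyA : ∀ ξ ∈ A, ∀ t,
      ξ t = if t = iA ξ then ξ (iA ξ) else if t = jA ξ then L - ξ (iA ξ) else 0 := by
    intro ξ hξ t
    obtain ⟨hsum, hcard⟩ := hξ
    have hne := hsuppA ξ hsum
    set s := Finset.univ.filter fun t => ξ t ≠ 0 with hsdef
    have hiAeq : iA ξ = s.min' hne := by rw [hiA]; exact dif_pos hne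
    have hjAeq : jA ξ = s.max' hne := by rw [hjA]; exact dif_pos hne
    have his : s.min' hne ∈ s := Finset.min'_mem _ _
    have hjs : s.max' hne ∈ s := Finset.max'_mem _ _
    have hsub : ∀ u ∈ s, u = s.min' hne ∨ u = s.max' hne := by
      intro u hu
      by_contra hcon
      push_neg at hcon
      obtain ⟨hui, huj⟩ := hcon
      by_cases hij : s.min' hne = s.max' hne
      · exact hui (le_antisymm (hij ▸ Finset.le_max' s u hu) (Finset.min'_le s u hu))
      · have hsub2 : ({u, s.min' hne, s.max' hne} : Finset (Fin n)) ⊆ s := by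
          intro x hx
          simp only [Finset.mem_insert, Finset.mem_singleton] at hx
          rcases hx with h | h | h <;> subst h <;> assumption
        have hc3 : ({u, s.min' hne, s.max' hne} : Finset (Fin n)).card = 3 := by
          rw [Finset.card_insert_of_notMem (by simp [hui, huj]),
            Finset.card_insert_of_notMem (by simp [hij]), Finset.card_singleton]
        have := Finset.card_le_card hsub2
        omega
    have hsums : ∑ u ∈ s, ξ u = L := by
      rw [hsdef, Finset.sum_filter_ne_zero]; exact hsum
    have hmem : ∀ u, ξ u ≠ 0 → u ∈ s := by
      intro u hu; rw [hsdef]; exact Finset.mem_filter.mpr ⟨Finset.mem_univ u, hu⟩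
    rw [hiAeq, hjAeq]
    by_cases hti : t = s.min' hne
    · rw [if_pos hti, hti]
    · rw [if_neg hti]
      by_cases htj : t = s.max' hne
      · rw [if_pos htj]
        have hij : s.min' hne ≠ s.max' hne := by
          intro h; exact hti (htj.trans h.symm)
        have hseq : s = {s.min' hne, s.max' hne} := by
          apply Finset.Subset.antisymm
          · intro u hu
            rcases hsub u hu with h | h <;> simp [h]
          · intro x hx
            simp only [Finset.mem_insert, Finset.mem_singleton] at hx
            rcases hx with h | h <;> subst h <;> assumption
        have hpair : ξ (s.min' hne) + ξ (s.max' hne) = L := by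
          have h5 := hsums
          rw [hseq, Finset.sum_pair hij] at h5
          exact h5
        rw [htj]; omega
      · rw [if_neg htj]
        by_contra h
        rcases hsub t (hmem t h) with hh | hh
        · exact hti hh
        · exact htj hh
  have hinjA : Function.Injective
      (fun x : ↥A => ((iA x.1, jA x.1, x.1 (iA x.1)) : Fin n × Fin n × ℕ)) := by
    intro x y hxy
    simp only [Prod.mk.injEq] at hxy
    obtain ⟨h1, h2, h3⟩ := hxy
    apply Subtype.ext
    funext t
    rw [keyA x.1 x.2 t, keyA y.1 y.2 t, h3, h1, h2]
  have hkcount : (∑' k : ℕ, if k ≤ L then (1 : ℝ≥0∞) else 0) = (L : ℝ≥0∞) + 1 := by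
    rw [tsum_eq_sum (s := Finset.range (L + 1))
      (by intro k hk; rw [if_neg]; simpa [Nat.lt_succ_iff] using hk)]
    rw [Finset.sum_congr rfl fun k hk =>
      if_pos (by simpa [Nat.lt_succ_iff] using hk)]
    simp [Finset.sum_const, Finset.card_range]
  have hSA : (∑' ξ, A.indicator (fun _ => (1 : ℝ≥0∞)) ξ)
      ≤ (n : ℝ≥0∞) * ((n : ℝ≥0∞) * ((L : ℝ≥0∞) + 1)) := by
    rw [← _root_.tsum_subtype]
    set fA : Fin n × Fin n × ℕ → ℝ≥0∞ := fun y => if y.2.2 ≤ L then 1 else 0 with hfA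
    have hstep1 : (∑' x : ↥A, (1 : ℝ≥0∞))
        ≤ ∑' x : ↥A, fA ((fun x : ↥A => ((iA x.1, jA x.1, x.1 (iA x.1)) : Fin n × Fin n × ℕ)) x) := by
      refine ENNReal.tsum_le_tsum fun x => ?_
      have hle : x.1 (iA x.1) ≤ L := by
        calc x.1 (iA x.1) ≤ ∑ i, x.1 i :=
          Finset.single_le_sum (fun i _ => Nat.zero_le _) (Finset.mem_univ _)
        _ = L := x.2.1
      simp only [hfA]
      rw [if_pos hle]
    refine le_trans hstep1 (le_trans (ENNReal.tsum_comp_le_tsum_of_injective hinjA fA) (le_of_eq ?_))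
    rw [ENNReal.tsum_prod']
    have hinner : ∀ a : Fin n, (∑' p : Fin n × ℕ, fA (a, p)) = (n : ℝ≥0∞) * ((L : ℝ≥0∞) + 1) := by
      intro a
      rw [ENNReal.tsum_prod']
      have : ∀ c : Fin n, (∑' k : ℕ, fA (a, c, k)) = (L : ℝ≥0∞) + 1 := fun c => hkcount
      rw [tsum_congr this, tsum_fintype]
      simp only [Finset.sum_const, Finset.card_univ, Fintype.card_fin, nsmul_eq_mul]
    rw [tsum_congr hinner, tsum_fintype]
    simp [Finset.sum_const, mul_comm]
  -- B part
  have keyB : ∀ ξ : Fin n → ℕ, (∑ i, ξ i) = L →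
      Function.update (Function.update ξ (iM ξ) 0) (iM ξ)
        (L - ∑ j, Function.update ξ (iM ξ) 0 j) = ξ := by
    intro ξ hsum
    have hsplit2 := Finset.sum_update_of_mem (Finset.mem_univ (iM ξ)) ξ 0
    have hsum2 : ξ (iM ξ) + ∑ x ∈ Finset.univ \ {iM ξ}, ξ x = L := by
      rw [← hsum, Finset.sum_eq_sum_sdiff_singleton_add (Finset.mem_univ (iM ξ))]
      omega
    have hupd : (∑ j, Function.update ξ (iM ξ) 0 j) = L - ξ (iM ξ) := by
      rw [hsplit2]; omega
    rw [hupd, Function.update_idem]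
    have h2 : L - (L - ξ (iM ξ)) = ξ (iM ξ) := by omega
    rw [h2, Function.update_eq_self]
  have hinjB : Function.Injective
      (fun x : ↥B => ((iM x.1, Function.update x.1 (iM x.1) 0) : Fin n × (Fin n → ℕ))) := by
    intro x y hxy
    simp only [Prod.mk.injEq] at hxy
    obtain ⟨h1, h2⟩ := hxy
    apply Subtype.ext
    rw [← keyB x.1 x.2.1, ← keyB y.1 y.2.1, h2, h1]
  have hwB : ∀ x : ↥B, w x.1 ≤ ∏ j, r ^ (Function.update x.1 (iM x.1) 0 j) := by
    rintro ⟨ξ, hsum, hcard⟩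
    dsimp only
    obtain ⟨u, v, hadj, huv⟩ := edge_exists G hκ ξ hcard (iM ξ) (hiMspec ξ)
    set η := Function.update ξ (iM ξ) 0 with hηdef
    set a := Finset.univ.sup η with hadef
    have hEa : (a : ℝ) ≤ E ξ :=
      le_trans (by exact_mod_cast Nat.cast_le.mpr huv) (energy_ge G ξ u v hadj)
    have hηa : ∀ j, η j ≤ a := fun j => Finset.le_sup (Finset.mem_univ j)
    have hsumη : (∑ j, η j) ≤ n * a := by
      calc ∑ j, η j ≤ ∑ _j : Fin n, a := Finset.sum_le_sum fun j _ => hηa j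
        _ = n * a := by rw [Finset.sum_const, Finset.card_univ, Fintype.card_fin, smul_eq_mul]
    have hchain : -b * E ξ ≤ -(b / n) * ((∑ j, η j : ℕ) : ℝ) := by
      have h1 : ((∑ j, η j : ℕ) : ℝ) ≤ (n : ℝ) * (a : ℝ) := by exact_mod_cast hsumη
      have h2 : ((∑ j, η j : ℕ) : ℝ) ≤ (n : ℝ) * E ξ :=
        le_trans h1 (mul_le_mul_of_nonneg_left hEa hn'.le)
      have h3 : b / n * ((∑ j, η j : ℕ) : ℝ) ≤ b / n * ((n : ℝ) * E ξ) :=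
        mul_le_mul_of_nonneg_left h2 (by positivity)
      have hne0 : (n : ℝ) ≠ 0 := ne_of_gt hn'
      have h4 : b / n * ((n : ℝ) * E ξ) = b * E ξ := by field_simp
      rw [neg_mul, neg_mul]
      linarith
    have hexpand : -(b / n) * ((∑ j, η j : ℕ) : ℝ) = ∑ j, ((η j : ℝ) * (-(b / n))) := by
      rw [← Finset.sum_mul]
      push_cast
      ring
    calc w ξ = ENNReal.ofReal (Real.exp (-b * E ξ)) := rfl
      _ ≤ ENNReal.ofReal (Real.exp (-(b / n) * ((∑ j, η j : ℕ) : ℝ))) :=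
          ENNReal.ofReal_le_ofReal (Real.exp_le_exp.mpr hchain)
      _ = ∏ j, r ^ η j := by
          rw [hexpand, Real.exp_sum,
            ENNReal.ofReal_prod_of_nonneg fun j _ => Real.exp_nonneg _]
          refine Finset.prod_congr rfl fun j _ => ?_
          rw [Real.exp_nat_mul, ENNReal.ofReal_pow (Real.exp_nonneg _), hr]
  have hSB : (∑' ξ, B.indicator w ξ) ≤ (n : ℝ≥0∞) * K ^ n := by
    rw [← _root_.tsum_subtype]
    calc (∑' x : ↥B, w x.1)
        ≤ ∑' x : ↥B, (fun p : Fin n × (Fin n → ℕ) => ∏ j, r ^ (p.2 j))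
            ((fun x : ↥B => ((iM x.1, Function.update x.1 (iM x.1) 0) : Fin n × (Fin n → ℕ))) x) :=
          ENNReal.tsum_le_tsum fun x => hwB x
      _ ≤ ∑' p : Fin n × (Fin n → ℕ), ∏ j, r ^ (p.2 j) :=
          ENNReal.tsum_comp_le_tsum_of_injective hinjB _
      _ = (n : ℝ≥0∞) * K ^ n := by
          rw [ENNReal.tsum_prod']
          have hinner : ∀ a : Fin n,
              (∑' η : Fin n → ℕ, ∏ j, r ^ η j) = K ^ n := by
            intro a
            rw [tsum_pi_pow n (fun k => r ^ k), ENNReal.tsum_geometric, hK]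
          rw [tsum_congr hinner, tsum_fintype]
          simp [Finset.sum_const]
  -- final assembly
  have hfin1 : (n : ℝ≥0∞) * ((n : ℝ≥0∞) * ((L : ℝ≥0∞) + 1)) ≤ 2 * (n : ℝ≥0∞) ^ 2 * L := by
    have h12 : (L : ℝ≥0∞) + 1 ≤ 2 * L := by
      calc (L : ℝ≥0∞) + 1 ≤ L + L := add_le_add le_rfl hL1
        _ = 2 * L := (two_mul _).symm
    calc (n : ℝ≥0∞) * ((n : ℝ≥0∞) * ((L : ℝ≥0∞) + 1))
        ≤ (n : ℝ≥0∞) * ((n : ℝ≥0∞) * (2 * L)) :=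
          mul_le_mul_right (mul_le_mul_right h12 _) _
      _ = 2 * (n : ℝ≥0∞) ^ 2 * L := by ring
  have hfin2 : (n : ℝ≥0∞) * K ^ n ≤ (n : ℝ≥0∞) * K ^ n * L :=
    le_mul_of_one_le_right' hL1
  have hRHS : ENNReal.ofReal (M.toReal * L) = M * L := by
    rw [ENNReal.ofReal_mul ENNReal.toReal_nonneg, ENNReal.ofReal_toReal hMne,
      ENNReal.ofReal_natCast]
  rw [hRHS]
  calc (∑' ξ : Fin n → ℕ,
          if (∑ i, ξ i) = L then
            ENNReal.ofReal (Real.exp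
              (-b * (1 / 2 * ∑ i, ∑ j, G.adjMatrix ℝ i j * (ξ i : ℝ) * (ξ j : ℝ))))
          else 0)
      = ∑' ξ, (if (∑ i, ξ i) = L then w ξ else 0) := rfl
    _ ≤ ∑' ξ, (A.indicator (fun _ => 1) ξ + B.indicator w ξ) :=
        ENNReal.tsum_le_tsum hsplit
    _ = (∑' ξ, A.indicator (fun _ => (1 : ℝ≥0∞)) ξ) + ∑' ξ, B.indicator w ξ :=
        ENNReal.tsum_add
    _ ≤ (n : ℝ≥0∞) * ((n : ℝ≥0∞) * ((L : ℝ≥0∞) + 1)) + (n : ℝ≥0∞) * K ^ n :=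
        add_le_add hSA hSB
    _ ≤ 2 * (n : ℝ≥0∞) ^ 2 * L + (n : ℝ≥0∞) * K ^ n * L :=
        add_le_add hfin1 hfin2
    _ = M * L := by rw [hM]; ring
end

section
/- Suppose α = 0, β > 0 and G has at least one edge (so λ₁(G) > 0). Then there exist a sequence (y_k)_{k≥0} in ℤ₊ⁿ with y₀ = 0 and, for every k, y_{k+1} = y_k + e_{i(k)} for some coordinate i(k), a constant c₁ > 0 and an integer K such that W(y_k) ≥ c₁ k² for all k ≥ K. Consequently Σ_{k=0}^∞ e^{−W(y_k)} < ∞. -/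
open Finset Real

set_option maxHeartbeats 1000000 in
/-- If `α = 0`, `β > 0` and `G` has at least one edge, there is a path `(y_k)` in `ℤ₊ⁿ`
starting at `0` and increasing one coordinate by `1` at each step, a constant `c₁ > 0` and
`K` such that `W(y_k) ≥ c₁ k²` for `k ≥ K`; consequently `Σ_k e^{−W(y_k)} < ∞`. -/
theorem stmt11 {n : ℕ} (G : SimpleGraph (Fin n)) [DecidableRel G.Adj]
    (α β : ℝ) (hα : α = 0) (hβ : 0 < β) (hedge : 0 < G.edgeFinset.card) :
    ∃ y : ℕ → (Fin n → ℕ),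
      y 0 = 0
      ∧ (∀ k : ℕ, ∃ i : Fin n, y (k + 1) = Function.update (y k) i (y k i + 1))
      ∧ (∃ c₁ : ℝ, 0 < c₁ ∧ ∃ K : ℕ, ∀ k : ℕ, K ≤ k → c₁ * (k : ℝ) ^ 2 ≤ W G α β (y k))
      ∧ Summable (fun k : ℕ => Real.exp (-W G α β (y k))) := by
  subst hα
  -- extract an edge
  have hab : ∃ a b : Fin n, G.Adj a b := by
    obtain ⟨e, he⟩ := Finset.card_pos.mp hedge
    rw [SimpleGraph.mem_edgeFinset] at he
    induction e using Sym2.ind with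
    | _ a b => exact ⟨a, b, he⟩
  obtain ⟨a, b, hab⟩ := hab
  have hne : a ≠ b := G.ne_of_adj hab
  set y : ℕ → Fin n → ℕ :=
    fun k i => if i = a then k - k / 2 else if i = b then k / 2 else 0 with hy
  refine ⟨y, ?_, ?_, ?_, ?_⟩
  · funext i
    simp [hy]
  · intro k
    rcases Nat.even_or_odd k with ⟨q, hq⟩ | ⟨q, hq⟩
    · refine ⟨a, ?_⟩
      funext i
      by_cases hia : i = a
      · subst hia; simp [hy, Function.update_self]; omega
      · simp only [hy, Function.update_of_ne hia]
        by_cases hib : i = b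
        · subst hib; simp [hne.symm]; omega
        · simp [hia, hib]
    · refine ⟨b, ?_⟩
      funext i
      by_cases hib : i = b
      · subst hib; simp [hy, hne.symm, Function.update_self]; omega
      · simp only [hy, Function.update_of_ne hib]
        by_cases hia : i = a
        · subst hia; simp; omega
        · simp [hia, hib]
  all_goals {
    have key : ∀ k : ℕ, β * ((y k a : ℝ) * (y k b : ℝ)) ≤ W G 0 β (y k) := by
      intro k
      have hsum : (2 : ℝ) * ((y k a : ℝ) * (y k b : ℝ)) ≤
          ∑ i, ∑ j, G.adjMatrix ℝ i j * (y k i : ℝ) * (y k j : ℝ) := by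
        rw [← Finset.sum_product']
        have hsub : ({(a, b), (b, a)} : Finset (Fin n × Fin n)) ⊆ Finset.univ ×ˢ Finset.univ := by
          simp
        have hle := Finset.sum_le_sum_of_subset_of_nonneg
          (f := fun p : Fin n × Fin n => G.adjMatrix ℝ p.1 p.2 * (y k p.1 : ℝ) * (y k p.2 : ℝ))
          hsub (fun p _ _ => by
            refine mul_nonneg (mul_nonneg ?_ (Nat.cast_nonneg _)) (Nat.cast_nonneg _)
            simp only [SimpleGraph.adjMatrix_apply]
            split_ifs <;> norm_num)
        refine le_trans (le_of_eq ?_) hle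
        rw [Finset.sum_pair (by simp [hne, hne.symm, Prod.ext_iff])]
        simp [SimpleGraph.adjMatrix, hab, hab.symm]
        ring
      have h := mul_le_mul_of_nonneg_left hsum (by positivity : (0:ℝ) ≤ β / 2)
      simp only [W, zero_div, zero_mul, Finset.sum_const_zero, zero_add]
      linarith
    have hWnn : ∀ k : ℕ, (0 : ℝ) ≤ W G 0 β (y k) := by
      intro k
      refine le_trans ?_ (key k)
      positivity
    have quad : ∀ k : ℕ, 2 ≤ k → β / 8 * (k : ℝ) ^ 2 ≤ W G 0 β (y k) := by
      intro k hk
      refine le_trans ?_ (key k)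
      have hya : (y k a : ℝ) = (k : ℝ) - (k / 2 : ℕ) := by
        simp [hy]
        rw [Nat.cast_sub (Nat.div_le_self k 2)]
      have hyb : (y k b : ℝ) = ((k / 2 : ℕ) : ℝ) := by simp [hy, hne.symm]
      rw [hya, hyb]
      have h1 : 2 * (k / 2 : ℕ) ≤ k := by omega
      have h2 : k ≤ 2 * (k / 2 : ℕ) + 1 := by omega
      have h1' : 2 * ((k / 2 : ℕ) : ℝ) ≤ (k : ℝ) := by exact_mod_cast h1
      have h2' : (k : ℝ) ≤ 2 * ((k / 2 : ℕ) : ℝ) + 1 := by exact_mod_cast h2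
      have hk' : (2 : ℝ) ≤ (k : ℝ) := by exact_mod_cast hk
      set Q : ℝ := ((k / 2 : ℕ) : ℝ) with hQ
      have h3 : (0:ℝ) ≤ (k:ℝ) - 2*Q := by linarith
      have h4 : (k:ℝ) - 2*Q ≤ 1 := by linarith
      have h5 : (1:ℝ) ≤ 2*Q := by linarith
      have hpure : (k:ℝ)^2 / 8 ≤ ((k:ℝ) - Q) * Q := by
        nlinarith [mul_nonneg h3 (by linarith : (0:ℝ) ≤ 1 - ((k:ℝ) - 2*Q)),
          mul_nonneg h3 (by linarith : (0:ℝ) ≤ 4*Q - 1), sq_nonneg Q]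
      nlinarith [mul_le_mul_of_nonneg_left hpure hβ.le]
    first
    | exact ⟨β / 8, by positivity, 2, quad⟩
    | · -- summability
        rw [← summable_nat_add_iff 2]
        have hgeom : Summable (fun k : ℕ => Real.exp (-(β / 8)) ^ k) :=
          summable_geometric_of_lt_one (Real.exp_nonneg _)
            (Real.exp_lt_one_iff.mpr (by linarith))
        refine Summable.of_nonneg_of_le (fun k => (Real.exp_pos _).le) (fun k => ?_) hgeom
        have h1 : β / 8 * ((k : ℝ) + 2) ^ 2 ≤ W G 0 β (y (k + 2)) := by
          have := quad (k + 2) (by omega)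
          push_cast at this ⊢
          linarith
        have h2 : β / 8 * (k : ℝ) ≤ β / 8 * ((k : ℝ) + 2) ^ 2 := by
          have hk0 : (0 : ℝ) ≤ (k : ℝ) := Nat.cast_nonneg k
          have hq : (k : ℝ) ≤ ((k : ℝ) + 2) ^ 2 := by nlinarith
          exact mul_le_mul_of_nonneg_left hq (by positivity)
        calc Real.exp (-W G 0 β (y (k + 2)))
            ≤ Real.exp (-(β / 8 * (k : ℝ))) := by
              apply Real.exp_le_exp.mpr; linarith
          _ = Real.exp (-(β / 8)) ^ k := by
              rw [← Real.exp_nat_mul]; ring_nf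
  }
end

section
/- Fix α, β ∈ ℝ. For every ξ ∈ ℤ₊ⁿ and every index i ∈ {1,…,n}, the modified-model detailed balance identity e^{α ξᵢ} · e^{W(ξ)} = e^{−β (Aξ)ᵢ} · e^{W(ξ + eᵢ)} holds, where (Aξ)ᵢ = (A(ξ+eᵢ))ᵢ since a_{ii} = 0. (Hence μ(ξ) = e^{W(ξ)} is reversible/invariant for the chain with birth rate e^{α ξᵢ} and death rate e^{−β (Aξ)ᵢ}.) -/
open Finset Real

/-- Detailed balance for the modified model:
`e^{α ξᵢ} · e^{W(ξ)} = e^{−β (Aξ)ᵢ} · e^{W(ξ + eᵢ)}`. -/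
theorem stmt15 {n : ℕ} (G : SimpleGraph (Fin n)) [DecidableRel G.Adj]
    (α β : ℝ) (ξ : Fin n → ℕ) (i : Fin n) :
    Real.exp (α * (ξ i : ℝ)) * Real.exp (W G α β ξ)
      = Real.exp (-β * (G.adjMatrix ℝ).mulVec (fun j => (ξ j : ℝ)) i)
          * Real.exp (W G α β (Function.update ξ i (ξ i + 1))) := by
  rw [← Real.exp_add, ← Real.exp_add]
  congr 1
  set x : Fin n → ℝ := fun j => (ξ j : ℝ) with hx
  set a := G.adjMatrix ℝ with ha
  have hupd : ∀ j, ((Function.update ξ i (ξ i + 1) j : ℕ) : ℝ)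
      = x j + (if j = i then (1:ℝ) else 0) := by
    intro j
    by_cases h : j = i <;> simp [h, Function.update_apply, hx]
  have hsym : ∀ k j, a k j = a j k := fun k j => by
    simp [ha, G.adj_comm]
  have haii : a i i = 0 := by simp [ha]
  have h1 : ∑ j, ((Function.update ξ i (ξ i + 1) j : ℕ) : ℝ)
      * (((Function.update ξ i (ξ i + 1) j : ℕ) : ℝ) - 1)
      = (∑ j, x j * (x j - 1)) + 2 * x i := by
    have hpt : ∀ j, ((Function.update ξ i (ξ i + 1) j : ℕ) : ℝ)
        * (((Function.update ξ i (ξ i + 1) j : ℕ) : ℝ) - 1)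
        = x j * (x j - 1) + if j = i then 2 * x j else 0 := by
      intro j
      rw [hupd j]
      by_cases h : j = i <;> simp [h] <;> ring
    simp only [hpt, Finset.sum_add_distrib, Finset.sum_ite_eq', Finset.mem_univ, if_true]
  have h2 : ∑ k, ∑ j, a k j * ((Function.update ξ i (ξ i + 1) k : ℕ) : ℝ)
      * ((Function.update ξ i (ξ i + 1) j : ℕ) : ℝ)
      = (∑ k, ∑ j, a k j * x k * x j) + 2 * ∑ j, a i j * x j := by
    have hpt : ∀ k j, a k j * ((Function.update ξ i (ξ i + 1) k : ℕ) : ℝ)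
        * ((Function.update ξ i (ξ i + 1) j : ℕ) : ℝ)
        = a k j * x k * x j + ((if j = i then a k j * x k else 0)
          + ((if j = i then (if k = i then a k j else 0) else 0)
            + if k = i then a k j * x j else 0)) := by
      intro k j
      rw [hupd k, hupd j]
      by_cases h : j = i <;> by_cases h' : k = i <;> simp [h, h'] <;> ring
    simp only [hpt, Finset.sum_add_distrib, Finset.sum_ite_eq', Finset.mem_univ, if_true,
      Finset.sum_ite_irrel, Finset.sum_const_zero, haii]
    have : ∑ k, a k i * x k = ∑ j, a i j * x j := by
      refine Finset.sum_congr rfl fun k _ => by rw [hsym]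
    rw [this]; ring
  rw [W, W, h1, h2]
  have hmv : (G.adjMatrix ℝ).mulVec (fun j => (ξ j : ℝ)) i = ∑ j, a i j * x j := by
    simp [Matrix.mulVec, dotProduct, ha, hx]
  rw [hmv]
  ring
end

section
/- For all real numbers x ≥ 2 and y ≥ 2, log(x² + (y−1)² − ½) + log((x−1)² + y² − ½) + log((x−2)² + (y−1)² − ½) + log((x−1)² + (y−2)² − ½) − 4 log((x−1)² + (y−1)² − ½) = log( 1 − 64 (x−y)² (x+y−2)² / (2x² + 2y² − 4x − 4y + 3)⁴ ) ≤ 0. (This is the generator computation showing f(ξ) = log(‖ξ − e‖² − n + 3/2) is a Lyapunov function for the hard-core chain at states with two positive coordinates.) -/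
open Real

/-- The generator computation for the hard-core Lyapunov function at states with two
positive coordinates: for `x, y ≥ 2`,
`log(x²+(y−1)²−½) + log((x−1)²+y²−½) + log((x−2)²+(y−1)²−½) + log((x−1)²+(y−2)²−½)
  − 4 log((x−1)²+(y−1)²−½)
  = log(1 − 64(x−y)²(x+y−2)²/(2x²+2y²−4x−4y+3)⁴)` ≤ 0`. -/
lemma aux16 (d p n : ℝ) (hd : d ≠ 0) (hn : n = d ^ 4 - 4 * p) :
    1 - 64 * p / (2 * d) ^ 4 = n / d ^ 4 := by
  subst hn; field_simp; ring

/-- The generator computation for the hard-core Lyapunov function at states with two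
positive coordinates: for `x, y ≥ 2`,
`log(x²+(y−1)²−½) + log((x−1)²+y²−½) + log((x−2)²+(y−1)²−½) + log((x−1)²+(y−2)²−½)
  − 4 log((x−1)²+(y−1)²−½)
  = log(1 − 64(x−y)²(x+y−2)²/(2x²+2y²−4x−4y+3)⁴) ≤ 0`. -/
theorem stmt16 (x y : ℝ) (hx : 2 ≤ x) (hy : 2 ≤ y) :
    (Real.log (x ^ 2 + (y - 1) ^ 2 - 1 / 2) + Real.log ((x - 1) ^ 2 + y ^ 2 - 1 / 2)
        + Real.log ((x - 2) ^ 2 + (y - 1) ^ 2 - 1 / 2)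
        + Real.log ((x - 1) ^ 2 + (y - 2) ^ 2 - 1 / 2)
        - 4 * Real.log ((x - 1) ^ 2 + (y - 1) ^ 2 - 1 / 2)
      = Real.log (1 - 64 * (x - y) ^ 2 * (x + y - 2) ^ 2
            / (2 * x ^ 2 + 2 * y ^ 2 - 4 * x - 4 * y + 3) ^ 4))
    ∧ Real.log (1 - 64 * (x - y) ^ 2 * (x + y - 2) ^ 2
          / (2 * x ^ 2 + 2 * y ^ 2 - 4 * x - 4 * y + 3) ^ 4) ≤ 0 := by
  have hA : (0:ℝ) < x ^ 2 + (y - 1) ^ 2 - 1 / 2 := by nlinarith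
  have hB : (0:ℝ) < (x - 1) ^ 2 + y ^ 2 - 1 / 2 := by nlinarith
  have hC : (0:ℝ) < (x - 2) ^ 2 + (y - 1) ^ 2 - 1 / 2 := by nlinarith
  have hE : (0:ℝ) < (x - 1) ^ 2 + (y - 2) ^ 2 - 1 / 2 := by nlinarith
  have hD : (0:ℝ) < (x - 1) ^ 2 + (y - 1) ^ 2 - 1 / 2 := by nlinarith
  have hden : (0:ℝ) < 2 * x ^ 2 + 2 * y ^ 2 - 4 * x - 4 * y + 3 := by nlinarith
  have hDne : ((x - 1) ^ 2 + (y - 1) ^ 2 - 1 / 2) ≠ 0 := ne_of_gt hD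
  have hdenne : (2 * x ^ 2 + 2 * y ^ 2 - 4 * x - 4 * y + 3) ≠ 0 := ne_of_gt hden
  have key : 1 - 64 * (x - y) ^ 2 * (x + y - 2) ^ 2
        / (2 * x ^ 2 + 2 * y ^ 2 - 4 * x - 4 * y + 3) ^ 4
      = (x ^ 2 + (y - 1) ^ 2 - 1 / 2) * ((x - 1) ^ 2 + y ^ 2 - 1 / 2)
        * ((x - 2) ^ 2 + (y - 1) ^ 2 - 1 / 2) * ((x - 1) ^ 2 + (y - 2) ^ 2 - 1 / 2)
        / ((x - 1) ^ 2 + (y - 1) ^ 2 - 1 / 2) ^ 4 := by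
    have h2 : 2 * x ^ 2 + 2 * y ^ 2 - 4 * x - 4 * y + 3
        = 2 * ((x - 1) ^ 2 + (y - 1) ^ 2 - 1 / 2) := by ring
    have hn : (x ^ 2 + (y - 1) ^ 2 - 1 / 2) * ((x - 1) ^ 2 + y ^ 2 - 1 / 2)
        * ((x - 2) ^ 2 + (y - 1) ^ 2 - 1 / 2) * ((x - 1) ^ 2 + (y - 2) ^ 2 - 1 / 2)
        = ((x - 1) ^ 2 + (y - 1) ^ 2 - 1 / 2) ^ 4
          - 4 * ((x - y) ^ 2 * (x + y - 2) ^ 2) := by ring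
    have h3 : 64 * (x - y) ^ 2 * (x + y - 2) ^ 2
        = 64 * ((x - y) ^ 2 * (x + y - 2) ^ 2) := by ring
    rw [h2, h3]
    exact aux16 _ _ _ hDne hn
  constructor
  · rw [key, Real.log_div (by positivity) (by positivity), Real.log_pow,
      Real.log_mul (by positivity) (ne_of_gt hE),
      Real.log_mul (by positivity) (ne_of_gt hC),
      Real.log_mul (ne_of_gt hA) (ne_of_gt hB)]
    push_cast
    ring
  · apply Real.log_nonpos
    · rw [key]; positivity
    · have : 0 ≤ 64 * (x - y) ^ 2 * (x + y - 2) ^ 2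
          / (2 * x ^ 2 + 2 * y ^ 2 - 4 * x - 4 * y + 3) ^ 4 := by positivity
      linarith
end
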